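/- Let m, n, d′ be positive integers and let a₀, …, a_{d′−1} ∈ ℂ[[X]] be one-variable power series with ord a_i > m·n·(d′ − i) for each i. Set f′(X,Y) = Y^{d′} + Σ_{i=0}^{d′−1} a_i(X)·Y^i. Let x, y ∈ ℂ[[t]] be power series with zero constant term such that y ≠ 0 and ord y ≤ m·n·ord x (with the convention ord 0 = ∞, so that the case x = 0 is allowed). Then ord( f′(x,y) − y^{d′} ) > d′·ord y; in particular f′(x,y) has order d′·ord y and its leading coefficient is y₀^{d′}, where y₀ is the leading coefficient of y. -/

import Mathlib

open PowerSeries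

/-- Composition `F(x)` of one-variable formal power series.  (The formula below computes
the correct substitution whenever `x` has zero constant term: the coefficient of `t^k` in
`F(x)` only receives contributions from the terms of `F` of degree at most `k`.) -/
noncomputable def psEval (F : PowerSeries ℂ) (x : PowerSeries ℂ) : PowerSeries ℂ :=
  PowerSeries.mk fun k =>
    ∑ j ∈ Finset.range (k + 1), PowerSeries.coeff j F * PowerSeries.coeff k (x ^ j)

private lemma order_pow' (z : PowerSeries ℂ) (j : ℕ) :
    (z ^ j).order = (j : ℕ∞) * z.order := by
  induction j with
  | zero => simp [PowerSeries.order_one]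
  | succ j ih =>
      rw [pow_succ, PowerSeries.order_mul, ih]
      push_cast
      ring

private lemma coeff_pow_ord (y : PowerSeries ℂ) (q : ℕ) (hq : y.order = (q : ℕ∞)) (j : ℕ) :
    PowerSeries.coeff (j * q) (y ^ j) = (PowerSeries.coeff q y) ^ j := by
  induction j with
  | zero => simp
  | succ j ih =>
      rw [pow_succ, PowerSeries.coeff_mul]
      rw [Finset.sum_eq_single ((j * q, q) : ℕ × ℕ)]
      · rw [ih, pow_succ]
      · intro p hp hne
        rw [Finset.HasAntidiagonal.mem_antidiagonal] at hp
        by_cases h1 : p.1 < j * q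
        · have : PowerSeries.coeff p.1 (y ^ j) = 0 := by
            apply PowerSeries.coeff_of_lt_order
            rw [order_pow' y j, hq]
            exact_mod_cast h1
          simp [this]
        · have h2 : p.2 < q := by
            rcases Nat.lt_or_ge p.2 q with h | h
            · exact h
            · exfalso; apply hne
              have hsm : (j + 1) * q = j * q + q := by ring
              have : p.1 = j * q ∧ p.2 = q := by omega
              exact Prod.ext this.1 this.2
          have : PowerSeries.coeff p.2 y = 0 := by
            apply PowerSeries.coeff_of_lt_order
            rw [hq]; exact_mod_cast h2
          simp [this]
      · intro h
        exfalso; apply h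
        rw [Finset.HasAntidiagonal.mem_antidiagonal]
        ring

/-- Let `m, n, d′` be positive integers and let `a₀, …, a_{d′−1} ∈ ℂ[[X]]` satisfy
`ord aᵢ > m·n·(d′ − i)`.  Set `f′(X,Y) = Y^{d′} + Σ aᵢ(X)·Yⁱ`.  Let `x, y ∈ ℂ[[t]]` have
zero constant term, with `y ≠ 0` and `ord y ≤ m·n·ord x` (convention `ord 0 = ∞`, so
`x = 0` is allowed).  Then `ord(f′(x,y) − y^{d′}) > d′·ord y`; in particular `f′(x,y)` has
order `d′·ord y` and its leading coefficient is `y₀^{d′}` where `y₀` is the leading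
coefficient of `y`. -/
theorem stmt9 (m n d' : ℕ) (hm : 0 < m) (hn : 0 < n) (hd' : 0 < d')
    (a : ℕ → PowerSeries ℂ)
    (ha : ∀ i < d', ((m * n * (d' - i) : ℕ) : ℕ∞) < (a i).order)
    (x y : PowerSeries ℂ)
    (hx0 : PowerSeries.constantCoeff x = 0) (hy0 : PowerSeries.constantCoeff y = 0)
    (hy : y ≠ 0) (hord : y.order ≤ ((m * n : ℕ) : ℕ∞) * x.order)
    (F : PowerSeries ℂ)
    (hF : F = y ^ d' + ∑ i ∈ Finset.range d', psEval (a i) x * y ^ i) :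
    (d' : ℕ∞) * y.order < (F - y ^ d').order ∧
    F.order = (d' : ℕ∞) * y.order ∧
    ∀ q : ℕ, y.order = q →
      PowerSeries.coeff (d' * q) F = (PowerSeries.coeff q y) ^ d' := by
  -- the order of y is a finite natural number q
  obtain ⟨q, hq⟩ : ∃ q : ℕ, y.order = (q : ℕ∞) := by
    cases hc : y.order with
    | top => exact absurd (PowerSeries.order_eq_top.1 hc) hy
    | coe q => exact ⟨q, rfl⟩
  -- order of x is at least 1
  have hx1 : (1 : ℕ∞) ≤ x.order := by
    apply PowerSeries.nat_le_order
    intro i hi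
    interval_cases i
    simpa using hx0
  -- key coefficient vanishing
  have key : ∀ i < d', ∀ k : ℕ, k ≤ d' * q →
      PowerSeries.coeff k (psEval (a i) x * y ^ i) = 0 := by
    intro i hi k hk
    rw [PowerSeries.coeff_mul]
    apply Finset.sum_eq_zero
    intro p hp
    rw [Finset.HasAntidiagonal.mem_antidiagonal] at hp
    by_cases h2 : p.2 < i * q
    · have : PowerSeries.coeff p.2 (y ^ i) = 0 := by
        apply PowerSeries.coeff_of_lt_order
        rw [order_pow' y i, hq]
        exact_mod_cast h2
      simp [this]
    · -- p.1 ≤ (d' - i) * q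
      have hp1 : p.1 ≤ (d' - i) * q := by
        have := Nat.sub_mul d' i q
        omega
      have hcast : (p.1 : ℕ∞) ≤ ((m * n * (d' - i) : ℕ) : ℕ∞) * x.order := by
        calc (p.1 : ℕ∞) ≤ (((d' - i) * q : ℕ) : ℕ∞) := by exact_mod_cast hp1
          _ = ((d' - i : ℕ) : ℕ∞) * (q : ℕ∞) := by push_cast; ring
          _ ≤ ((d' - i : ℕ) : ℕ∞) * (((m * n : ℕ) : ℕ∞) * x.order) := by
              apply mul_le_mul_right
              rw [← hq]; exact hord
          _ = ((m * n * (d' - i) : ℕ) : ℕ∞) * x.order := by push_cast; ring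
      have hzero1 : PowerSeries.coeff p.1 (psEval (a i) x) = 0 := by
        rw [psEval, PowerSeries.coeff_mk]
        apply Finset.sum_eq_zero
        intro j hj
        by_cases hja : j ≤ m * n * (d' - i)
        · have : PowerSeries.coeff j (a i) = 0 := by
            apply PowerSeries.coeff_of_lt_order
            exact lt_of_le_of_lt (by exact_mod_cast hja) (ha i hi)
          simp [this]
        · have hjb : m * n * (d' - i) + 1 ≤ j := by omega
          have : PowerSeries.coeff p.1 (x ^ j) = 0 := by
            apply PowerSeries.coeff_of_lt_order
            rw [order_pow' x j]
            have step1 : (p.1 : ℕ∞) + 1 ≤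
                ((m * n * (d' - i) : ℕ) : ℕ∞) * x.order + x.order :=
              add_le_add hcast hx1
            have step2 : ((m * n * (d' - i) : ℕ) : ℕ∞) * x.order + x.order
                = ((m * n * (d' - i) + 1 : ℕ) : ℕ∞) * x.order := by
              push_cast; ring
            have step3 : ((m * n * (d' - i) + 1 : ℕ) : ℕ∞) * x.order ≤ (j : ℕ∞) * x.order := by
              apply mul_le_mul_left
              exact_mod_cast hjb
            have : (p.1 : ℕ∞) + 1 ≤ (j : ℕ∞) * x.order := le_trans step1 (step2 ▸ step3)
            exact lt_of_lt_of_le (by exact_mod_cast Nat.lt_succ_self p.1 : (p.1 : ℕ∞) < (p.1 : ℕ∞) + 1) this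
          simp [this]
      simp [hzero1]
  -- order of the rest is > d' * q
  set R := ∑ i ∈ Finset.range d', psEval (a i) x * y ^ i with hRdef
  have hFR : F - y ^ d' = R := by rw [hF]; ring
  have hRord : ((d' * q : ℕ) : ℕ∞) < R.order := by
    have : ((d' * q + 1 : ℕ) : ℕ∞) ≤ R.order := by
      apply PowerSeries.nat_le_order
      intro k hk
      rw [hRdef, map_sum]
      apply Finset.sum_eq_zero
      intro i hi
      exact key i (Finset.mem_range.1 hi) k (by omega)
    exact lt_of_lt_of_le (by exact_mod_cast Nat.lt_succ_self (d' * q)) this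
  have hdq : (d' : ℕ∞) * y.order = ((d' * q : ℕ) : ℕ∞) := by rw [hq]; push_cast; ring
  have hypow : (y ^ d').order = ((d' * q : ℕ) : ℕ∞) := by
    rw [order_pow' y d', hq]; push_cast; ring
  refine ⟨?_, ?_, ?_⟩
  · rw [hFR, hdq]; exact hRord
  · have hne : (y ^ d').order ≠ R.order := by
      rw [hypow]; exact ne_of_lt hRord
    have : F.order = min (y ^ d').order R.order := by
      rw [hF]
      exact PowerSeries.order_add_of_order_ne _ _ hne
    rw [this, hypow, hdq, min_eq_left (le_of_lt hRord)]
  · intro q' hq'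
    have hqq : q' = q := by
      rw [hq] at hq'; exact_mod_cast hq'.symm
    subst hqq
    rw [hF, map_add]
    have h1 : PowerSeries.coeff (d' * q') R = 0 := by
      apply PowerSeries.coeff_of_lt_order
      exact hRord
    rw [h1, add_zero, coeff_pow_ord y q' hq]
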